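/- Let X₁, …, X_N be i.i.d. uniform on [d], let Z count the number of distinct values among them, and set K = N(N−1)/(2d). Then for any t > 0, P(Z ≤ N − N(N−1)/(2d) − t) ≤ exp(−t²/(2K + 2t/3)). -/

import Mathlib

open Finset

lemma psi_g_nonneg : ∀ u : ℝ, 0 ≤ u → 0 ≤ u + 2 - (2 - u) * Real.exp u := by
  have hmono : MonotoneOn (fun u : ℝ => u + 2 - (2 - u) * Real.exp u) (Set.Ici 0) := by
    apply monotoneOn_of_deriv_nonneg (convex_Ici 0)
    · fun_prop
    · apply Differentiable.differentiableOn; fun_prop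
    · intro x hx
      have h1 : HasDerivAt (fun u : ℝ => u + 2 - (2 - u) * Real.exp u)
          (1 - ((-1) * Real.exp x + (2 - x) * Real.exp x)) x := by
        have := ((hasDerivAt_id x).const_sub 2).mul (Real.hasDerivAt_exp x)
        exact (((hasDerivAt_id x).add_const 2).sub this)
      rw [h1.deriv]
      have h2 : (1 - x) * Real.exp x ≤ Real.exp (-x) * Real.exp x := by
        apply mul_le_mul_of_nonneg_right _ (Real.exp_pos x).le
        linarith [Real.add_one_le_exp (-x)]
      rw [← Real.exp_add, neg_add_cancel, Real.exp_zero] at h2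
      nlinarith [Real.exp_pos x]
  intro u hu
  have := hmono (Set.self_mem_Ici) (Set.mem_Ici.2 hu) hu
  simpa using this

lemma psi_f_nonneg : ∀ u : ℝ, 0 ≤ u → (1 - u / 3) * (Real.exp u - 1 - u) ≤ u ^ 2 / 2 := by
  have hmono : MonotoneOn (fun u : ℝ => u ^ 2 / 2 - (1 - u / 3) * (Real.exp u - 1 - u))
      (Set.Ici 0) := by
    apply monotoneOn_of_deriv_nonneg (convex_Ici 0)
    · fun_prop
    · apply Differentiable.differentiableOn; fun_prop
    · intro x hx
      have h1 : HasDerivAt (fun u : ℝ => u ^ 2 / 2 - (1 - u / 3) * (Real.exp u - 1 - u))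
          (x - ((-(1/3)) * (Real.exp x - 1 - x) + (1 - x / 3) * (Real.exp x - 1))) x := by
        have ha : HasDerivAt (fun u : ℝ => 1 - u / 3) (-(1/3)) x := by
          simpa using ((hasDerivAt_id x).div_const 3).const_sub 1
        have hb : HasDerivAt (fun u : ℝ => Real.exp u - 1 - u) (Real.exp x - 1) x := by
          exact ((Real.hasDerivAt_exp x).sub_const 1).sub (hasDerivAt_id x)
        have hc : HasDerivAt (fun u : ℝ => u ^ 2 / 2) x x := by
          simpa using (hasDerivAt_pow 2 x).div_const 2
        exact hc.sub (ha.mul hb)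
      rw [h1.deriv]
      have hx0 : (0:ℝ) ≤ x := interior_subset hx |>.out
      have := psi_g_nonneg x hx0
      nlinarith [Real.exp_pos x]
  intro u hu
  have := hmono (Set.self_mem_Ici) (Set.mem_Ici.2 hu) hu
  simp only [Real.exp_zero] at this
  nlinarith [this]

lemma psi_le (l : ℝ) (h0 : 0 ≤ l) (h3 : l < 3) :
    Real.exp l - 1 - l ≤ l ^ 2 / (2 * (1 - l / 3)) := by
  have h1 : 0 < 1 - l / 3 := by linarith
  have := psi_f_nonneg l h0
  rw [le_div_iff₀ (by positivity : (0:ℝ) < 2 * (1 - l / 3))]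
  nlinarith


namespace Stmt12

variable {N d : ℕ}

def prior (i : Fin N) (x : Fin N → Fin d) : Finset (Fin d) :=
  (Finset.Iio i).image x

noncomputable def Zf (i : Fin N) (x : Fin N → Fin d) : ℝ :=
  if ∀ j, j < i → x j ≠ x i then 1 else 0

noncomputable def Vf (i : Fin N) (x : Fin N → Fin d) : ℝ :=
  (1 - ((prior i x).card : ℝ) / d) - Zf i x

noncomputable def G (k : ℕ) (x : Fin N → Fin d) : ℝ :=
  ∑ i ∈ Finset.univ.filter (fun i : Fin N => (i : ℕ) < k), Vf i x

lemma Zf_eq (i : Fin N) (x : Fin N → Fin d) :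
    Zf i x = if x i ∈ prior i x then 0 else 1 := by
  unfold Zf prior
  by_cases h : ∀ j, j < i → x j ≠ x i
  · rw [if_pos h, if_neg]
    simp only [Finset.mem_image, Finset.mem_Iio]
    rintro ⟨j, hj, hje⟩
    exact h j hj hje
  · rw [if_neg h, if_pos]
    push_neg at h
    obtain ⟨j, hj, hje⟩ := h
    exact Finset.mem_image.2 ⟨j, Finset.mem_Iio.2 hj, hje⟩

lemma Vf_eq (i : Fin N) (x : Fin N → Fin d) :
    Vf i x = (1 - ((prior i x).card : ℝ) / d) - (if x i ∈ prior i x then 0 else 1) := by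
  rw [Vf, Zf_eq]

lemma prior_card_le (i : Fin N) (x : Fin N → Fin d) : (prior i x).card ≤ i.val := by
  refine le_trans Finset.card_image_le ?_
  simp [Fin.card_Iio]

lemma prior_congr {k : Fin N} {x x' : Fin N → Fin d} (h : ∀ j, j ≠ k → x j = x' j)
    {i : Fin N} (hi : i ≤ k) : prior i x = prior i x' := by
  unfold prior
  apply Finset.image_congr
  intro j hj
  simp only [Finset.coe_Iio, Set.mem_Iio] at hj
  exact h j (ne_of_lt (lt_of_lt_of_le hj hi))

lemma Vf_congr {k : Fin N} {x x' : Fin N → Fin d} (h : ∀ j, j ≠ k → x j = x' j)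
    {i : Fin N} (hi : i < k) : Vf i x = Vf i x' := by
  have hp : prior i x = prior i x' := prior_congr h hi.le
  have hxi : x i = x' i := h i (ne_of_lt hi)
  rw [Vf_eq, Vf_eq, hp, hxi]

lemma G_zero (x : Fin N → Fin d) : G 0 x = 0 := by simp [G]

lemma G_succ {k : ℕ} (hk : k < N) (x : Fin N → Fin d) :
    G (k + 1) x = G k x + Vf ⟨k, hk⟩ x := by
  unfold G
  have hset : (Finset.univ.filter (fun i : Fin N => (i : ℕ) < k + 1))
      = insert (⟨k, hk⟩ : Fin N) (Finset.univ.filter (fun i : Fin N => (i : ℕ) < k)) := by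
    ext i
    simp only [Finset.mem_insert, Finset.mem_filter, Finset.mem_univ, true_and]
    constructor
    · intro h
      rcases Nat.lt_succ_iff_lt_or_eq.1 h with h | h
      · exact Or.inr h
      · exact Or.inl (Fin.ext h)
    · rintro (rfl | h)
      · exact Nat.lt_succ_self k
      · exact Nat.lt_succ_of_lt h
  rw [hset, Finset.sum_insert (by simp), add_comm]

lemma G_congr {k : ℕ} (hk : k < N) {x x' : Fin N → Fin d}
    (h : ∀ j, j ≠ (⟨k, hk⟩ : Fin N) → x j = x' j) : G k x = G k x' := by
  unfold G
  apply Finset.sum_congr rfl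
  intro i hi
  simp only [Finset.mem_filter] at hi
  exact Vf_congr h (by exact hi.2)

lemma splitAt_self (k : Fin N) (v : Fin d) (y : {j : Fin N // j ≠ k} → Fin d) :
    (Equiv.piSplitAt k (fun _ => Fin d)).symm (v, y) k = v := by
  simp [Equiv.piSplitAt]

lemma splitAt_ne (k : Fin N) (v : Fin d) (y : {j : Fin N // j ≠ k} → Fin d)
    {j : Fin N} (h : j ≠ k) :
    (Equiv.piSplitAt k (fun _ => Fin d)).symm (v, y) j = y ⟨j, h⟩ := by
  simp [Equiv.piSplitAt, h]

lemma sum_exp_step (hd : 0 < d) (k : Fin N) (l : ℝ) (hl : 0 ≤ l)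
    (S : Finset (Fin d)) (hS : S.card ≤ k.val) :
    ∑ v : Fin d, Real.exp (l * ((1 - (S.card : ℝ) / d) - (if v ∈ S then 0 else 1)))
      ≤ d * Real.exp ((Real.exp l - 1 - l) * ((k.val : ℝ) / d)) := by
  have hd' : (0:ℝ) < d := by exact_mod_cast hd
  set p : ℝ := (S.card : ℝ) / d with hp
  have hp0 : 0 ≤ p := by positivity
  have hpk : p ≤ (k.val : ℝ) / d := by
    rw [hp]; gcongr
    all_goals exact_mod_cast hS
  have hψ : 0 ≤ Real.exp l - 1 - l := by linarith [Real.add_one_le_exp l]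
  have hterm : ∀ v : Fin d,
      Real.exp (l * ((1 - p) - (if v ∈ S then (0:ℝ) else 1)))
        = if v ∈ S then Real.exp (l * (1 - p)) else Real.exp (l * (1 - p) - l) := by
    intro v
    split <;> ring_nf
  calc ∑ v : Fin d, Real.exp (l * ((1 - p) - (if v ∈ S then 0 else 1)))
      = ∑ v : Fin d, (if v ∈ S then Real.exp (l * (1 - p)) else Real.exp (l * (1 - p) - l)) := by
        exact Finset.sum_congr rfl fun v _ => hterm v
    _ = (S.card : ℝ) * Real.exp (l * (1 - p)) + ((d : ℝ) - S.card) * Real.exp (l * (1 - p) - l) := by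
        have hsplit : ∀ v : Fin d, (if v ∈ S then Real.exp (l * (1 - p)) else Real.exp (l * (1 - p) - l))
            = Real.exp (l * (1 - p) - l)
              + (if v ∈ S then Real.exp (l * (1 - p)) - Real.exp (l * (1 - p) - l) else 0) := by
          intro v; split <;> ring
        rw [Finset.sum_congr rfl (fun v _ => hsplit v), Finset.sum_add_distrib,
          Finset.sum_const, Finset.sum_ite_mem, Finset.univ_inter, Finset.sum_const,
          Finset.card_univ, Fintype.card_fin]
        simp only [nsmul_eq_mul]
        ring
    _ = (d : ℝ) * (Real.exp (-(l * p)) * (1 + p * (Real.exp l - 1))) := by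
        have e1 : l * (1 - p) = l + -(l * p) := by ring
        have e2 : l * (1 - p) - l = -(l * p) := by ring
        rw [e2, e1, Real.exp_add]
        have : (S.card : ℝ) = d * p := by rw [hp]; field_simp
        rw [this]
        ring
    _ ≤ (d : ℝ) * (Real.exp (-(l * p)) * Real.exp (p * (Real.exp l - 1))) := by
        have h1 : 1 + p * (Real.exp l - 1) ≤ Real.exp (p * (Real.exp l - 1)) := by
          linarith [Real.add_one_le_exp (p * (Real.exp l - 1))]
        have hE := (Real.exp_pos (-(l * p))).le
        exact mul_le_mul_of_nonneg_left (mul_le_mul_of_nonneg_left h1 hE) hd'.le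
    _ = (d : ℝ) * Real.exp ((Real.exp l - 1 - l) * p) := by
        rw [← Real.exp_add]; congr 1; ring
    _ ≤ (d : ℝ) * Real.exp ((Real.exp l - 1 - l) * ((k.val : ℝ) / d)) := by
        gcongr
        all_goals exact mul_le_mul_of_nonneg_left hpk hψ

lemma mgf_le (hd : 0 < d) (l : ℝ) (hl : 0 ≤ l) :
    ∀ k, k ≤ N →
      ∑ x : Fin N → Fin d, Real.exp (l * G k x)
        ≤ (d : ℝ) ^ N * Real.exp ((Real.exp l - 1 - l) / d
            * ∑ j ∈ Finset.range k, (j : ℝ)) := by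
  intro k
  induction k with
  | zero =>
    intro _
    simp [G_zero]
  | succ k ih =>
    intro hk1
    have hk : k < N := hk1
    have IH := ih (Nat.le_of_succ_le hk1)
    set κ : Fin N := ⟨k, hk⟩ with hκ
    set e := Equiv.piSplitAt κ (fun _ : Fin N => Fin d) with he
    have hagree : ∀ (v v' : Fin d) (y : {j : Fin N // j ≠ κ} → Fin d),
        ∀ j, j ≠ κ → e.symm (v, y) j = e.symm (v', y) j := by
      intro v v' y j hj
      rw [splitAt_ne κ v y hj, splitAt_ne κ v' y hj]
    have v0 : Fin d := ⟨0, hd⟩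
    set x0 : ({j : Fin N // j ≠ κ} → Fin d) → (Fin N → Fin d) :=
      fun y => e.symm (⟨0, hd⟩, y) with hx0
    have hL : ∑ x : Fin N → Fin d, Real.exp (l * G (k+1) x)
        = ∑ y : {j : Fin N // j ≠ κ} → Fin d,
            Real.exp (l * G k (x0 y)) * ∑ v : Fin d, Real.exp (l * Vf κ (e.symm (v, y))) := by
      rw [← Equiv.sum_comp e.symm (fun x => Real.exp (l * G (k+1) x)),
        Fintype.sum_prod_type, Finset.sum_comm]
      apply Finset.sum_congr rfl; intro y _
      rw [Finset.mul_sum]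
      apply Finset.sum_congr rfl; intro v _
      rw [G_succ hk, mul_add, Real.exp_add,
        show G k (e.symm (v, y)) = G k (x0 y) from G_congr hk (hagree v ⟨0, hd⟩ y)]
    have hinner : ∀ y : {j : Fin N // j ≠ κ} → Fin d,
        ∑ v : Fin d, Real.exp (l * Vf κ (e.symm (v, y)))
          ≤ d * Real.exp ((Real.exp l - 1 - l) * ((k : ℝ) / d)) := by
      intro y
      set S := prior κ (x0 y) with hSdef
      have hScard : S.card ≤ κ.val := prior_card_le κ (x0 y)
      have hVf : ∀ v : Fin d, Vf κ (e.symm (v, y))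
          = (1 - (S.card : ℝ) / d) - (if v ∈ S then 0 else 1) := by
        intro v
        rw [Vf_eq]
        have hpr : prior κ (e.symm (v, y)) = S := by
          rw [hSdef, hx0]
          exact prior_congr (hagree v ⟨0, hd⟩ y) le_rfl
        rw [hpr, splitAt_self]
      calc ∑ v : Fin d, Real.exp (l * Vf κ (e.symm (v, y)))
          = ∑ v : Fin d, Real.exp (l * ((1 - (S.card : ℝ) / d) - (if v ∈ S then 0 else 1))) := by
            exact Finset.sum_congr rfl fun v _ => by rw [hVf v]
        _ ≤ d * Real.exp ((Real.exp l - 1 - l) * ((κ.val : ℝ) / d)) :=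
            sum_exp_step hd κ l hl S hScard
    have hback : ∑ y : {j : Fin N // j ≠ κ} → Fin d, Real.exp (l * G k (x0 y)) * (d : ℝ)
        = ∑ x : Fin N → Fin d, Real.exp (l * G k x) := by
      rw [← Equiv.sum_comp e.symm (fun x => Real.exp (l * G k x)),
        Fintype.sum_prod_type, Finset.sum_comm]
      apply Finset.sum_congr rfl; intro y _
      have : ∀ v : Fin d, Real.exp (l * G k (e.symm (v, y))) = Real.exp (l * G k (x0 y)) := by
        intro v
        rw [show G k (e.symm (v, y)) = G k (x0 y) from G_congr hk (hagree v ⟨0, hd⟩ y)]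
      rw [Finset.sum_congr rfl (fun v _ => this v), Finset.sum_const, Finset.card_univ,
        Fintype.card_fin, nsmul_eq_mul, mul_comm]
    calc ∑ x : Fin N → Fin d, Real.exp (l * G (k+1) x)
        = ∑ y : {j : Fin N // j ≠ κ} → Fin d,
            Real.exp (l * G k (x0 y)) * ∑ v : Fin d, Real.exp (l * Vf κ (e.symm (v, y))) := hL
      _ ≤ ∑ y : {j : Fin N // j ≠ κ} → Fin d,
            Real.exp (l * G k (x0 y)) * ((d : ℝ) * Real.exp ((Real.exp l - 1 - l) * ((k : ℝ) / d))) := by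
          apply Finset.sum_le_sum
          intro y _
          exact mul_le_mul_of_nonneg_left (hinner y) (Real.exp_pos _).le
      _ = Real.exp ((Real.exp l - 1 - l) * ((k : ℝ) / d))
            * ∑ y : {j : Fin N // j ≠ κ} → Fin d, Real.exp (l * G k (x0 y)) * (d : ℝ) := by
          rw [Finset.mul_sum]
          apply Finset.sum_congr rfl; intro y _; ring
      _ = Real.exp ((Real.exp l - 1 - l) * ((k : ℝ) / d))
            * ∑ x : Fin N → Fin d, Real.exp (l * G k x) := by rw [hback]
      _ ≤ Real.exp ((Real.exp l - 1 - l) * ((k : ℝ) / d))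
            * ((d : ℝ) ^ N * Real.exp ((Real.exp l - 1 - l) / d * ∑ j ∈ Finset.range k, (j : ℝ))) := by
          exact mul_le_mul_of_nonneg_left IH (Real.exp_pos _).le
      _ = (d : ℝ) ^ N * Real.exp ((Real.exp l - 1 - l) / d * ∑ j ∈ Finset.range (k+1), (j : ℝ)) := by
          rw [Finset.sum_range_succ, mul_add, Real.exp_add]
          ring_nf



variable {N d : ℕ}

lemma sum_range_cast (n : ℕ) : (∑ j ∈ Finset.range n, (j : ℝ)) = n * (n - 1) / 2 := by
  induction n with
  | zero => simp
  | succ n ih =>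
    rw [Finset.sum_range_succ, ih]
    push_cast
    ring

lemma G_top (x : Fin N → Fin d) : G N x = ∑ i, Vf i x := by
  unfold G
  apply Finset.sum_congr _ (fun _ _ => rfl)
  ext i
  simp [i.isLt]

lemma count_bound (hd : 0 < d) (t K : ℝ) (ht : 0 < t)
    (hK : K = (N : ℝ) * ((N : ℝ) - 1) / (2 * d))
    (B : Finset (Fin N → Fin d))
    (hB : ∀ x ∈ B, (∑ i, Zf i x) ≤ (N : ℝ) - (N : ℝ) * ((N : ℝ) - 1) / (2 * d) - t) :
    (B.card : ℝ) ≤ (d : ℝ) ^ N * Real.exp (-t ^ 2 / (2 * K + 2 * t / 3)) := by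
  have hd' : (0:ℝ) < d := by exact_mod_cast hd
  rcases Nat.lt_or_ge N 2 with hN | hN
  · -- N ≤ 1 : B is empty
    have hBempty : B = ∅ := by
      rw [Finset.eq_empty_iff_forall_notMem]
      intro x hx
      have h1 : ∀ i : Fin N, Zf i x = 1 := by
        intro i
        rw [Zf]
        rw [if_pos]
        intro j hj _
        interval_cases N
        · exact absurd i.isLt (by omega)
        · omega
      have h2 : (∑ i, Zf i x) = (N : ℝ) := by
        rw [Finset.sum_congr rfl (fun i _ => h1 i)]
        simp
      have h3 := hB x hx
      rw [h2] at h3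
      have h4 : (N : ℝ) * ((N : ℝ) - 1) = 0 := by
        interval_cases N <;> norm_num
      rw [h4] at h3
      simp at h3
      linarith
    rw [hBempty]
    simp only [Finset.card_empty, Nat.cast_zero]
    positivity

  · -- main case : N ≥ 2
    have hN' : (2:ℝ) ≤ N := by exact_mod_cast hN
    have hK0 : 0 < K := by
      rw [hK]
      have : (0:ℝ) < (N : ℝ) * ((N : ℝ) - 1) := by nlinarith
      positivity
    set l : ℝ := t / (K + t / 3) with hl
    have hc0 : 0 < K + t / 3 := by linarith
    have hl0 : 0 < l := by positivity
    have hl3 : l < 3 := by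
      rw [hl, div_lt_iff₀ hc0]
      linarith
    set ψ : ℝ := Real.exp l - 1 - l with hψ
    have hψ0 : 0 ≤ ψ := by
      rw [hψ]; linarith [Real.add_one_le_exp l]
    -- pointwise : on B, the sum of Vf is at least t
    have hpoint : ∀ x ∈ B, t ≤ ∑ i, Vf i x := by
      intro x hx
      have h1 : (∑ i, Vf i x) = (∑ i : Fin N, (1 - ((prior i x).card : ℝ) / d)) - ∑ i, Zf i x := by
        rw [← Finset.sum_sub_distrib]
        exact Finset.sum_congr rfl fun i _ => rfl
      have h2 : (∑ i : Fin N, (1 - ((prior i x).card : ℝ) / d))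
          ≥ (N : ℝ) - (N : ℝ) * ((N : ℝ) - 1) / (2 * d) := by
        have h3 : ∀ i : Fin N, (1 : ℝ) - ((i.val : ℝ)) / d ≤ 1 - ((prior i x).card : ℝ) / d := by
          intro i
          have := prior_card_le i x
          have : ((prior i x).card : ℝ) ≤ (i.val : ℝ) := by exact_mod_cast this
          have hdiv : ((prior i x).card : ℝ) / d ≤ (i.val : ℝ) / d := by gcongr
          linarith
        have h4 := Finset.sum_le_sum (fun i (_ : i ∈ Finset.univ) => h3 i)
        have h5 : (∑ i : Fin N, ((1 : ℝ) - (i.val : ℝ) / d))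
            = (N : ℝ) - (N : ℝ) * ((N : ℝ) - 1) / (2 * d) := by
          rw [Finset.sum_sub_distrib, Finset.sum_const, Finset.card_univ, Fintype.card_fin]
          rw [← Finset.sum_div, Fin.sum_univ_eq_sum_range (fun i => (i : ℝ)), sum_range_cast]
          ring
        rw [h5] at h4
        exact h4
      have h6 := hB x hx
      rw [h1]
      linarith
    -- Chernoff
    have hchain : (B.card : ℝ) * Real.exp (l * t) ≤ (d : ℝ) ^ N * Real.exp (ψ * K) := by
      calc (B.card : ℝ) * Real.exp (l * t) = ∑ _x ∈ B, Real.exp (l * t) := by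
            rw [Finset.sum_const, nsmul_eq_mul]
        _ ≤ ∑ x ∈ B, Real.exp (l * ∑ i, Vf i x) := by
            apply Finset.sum_le_sum
            intro x hx
            apply Real.exp_le_exp.2
            exact mul_le_mul_of_nonneg_left (hpoint x hx) hl0.le
        _ ≤ ∑ x : Fin N → Fin d, Real.exp (l * ∑ i, Vf i x) := by
            apply Finset.sum_le_sum_of_subset_of_nonneg (Finset.subset_univ B)
            intro x _ _
            exact (Real.exp_pos _).le
        _ = ∑ x : Fin N → Fin d, Real.exp (l * G N x) := by
            exact Finset.sum_congr rfl fun x _ => by rw [G_top]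
        _ ≤ (d : ℝ) ^ N * Real.exp (ψ / d * ∑ j ∈ Finset.range N, (j : ℝ)) :=
            mgf_le hd l hl0.le N le_rfl
        _ = (d : ℝ) ^ N * Real.exp (ψ * K) := by
            rw [sum_range_cast]
            congr 1
            rw [hK]
            ring
    -- optimize the exponent
    have hexp : ψ * K - l * t ≤ -t ^ 2 / (2 * K + 2 * t / 3) := by
      have hpsile : ψ ≤ l ^ 2 / (2 * (1 - l / 3)) := psi_le l hl0.le hl3
      have he1 : 1 - l / 3 = K / (K + t / 3) := by
        rw [hl]; field_simp; ring
      have he2 : l ^ 2 / (2 * (1 - l / 3)) * K = t ^ 2 / (2 * (K + t / 3)) := by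
        rw [he1, hl]
        field_simp
      have he3 : l * t = t ^ 2 / (K + t / 3) := by
        rw [hl]; field_simp
      have h7 : ψ * K ≤ t ^ 2 / (2 * (K + t / 3)) := by
        rw [← he2]
        exact mul_le_mul_of_nonneg_right hpsile hK0.le
      rw [he3]
      have he4 : -t ^ 2 / (2 * K + 2 * t / 3) = t ^ 2 / (2 * (K + t / 3)) - t ^ 2 / (K + t / 3) := by
        field_simp
        ring
      rw [he4]
      linarith
    have hfinal : (B.card : ℝ) ≤ (d : ℝ) ^ N * Real.exp (ψ * K - l * t) := by
      have hEt := Real.exp_pos (l * t)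
      have h8 : (B.card : ℝ) ≤ (d : ℝ) ^ N * Real.exp (ψ * K) / Real.exp (l * t) :=
        (le_div_iff₀ hEt).2 hchain
      rw [Real.exp_sub, ← mul_div_assoc]
      exact h8
    calc (B.card : ℝ) ≤ (d : ℝ) ^ N * Real.exp (ψ * K - l * t) := hfinal
      _ ≤ (d : ℝ) ^ N * Real.exp (-t ^ 2 / (2 * K + 2 * t / 3)) :=
          mul_le_mul_of_nonneg_left (Real.exp_le_exp.2 hexp) (by positivity)

end Stmt12

open MeasureTheory ProbabilityTheory

/-- concentration of the number of distinct values among i.i.d.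
uniform draws on `[d]` (Freedman-style lower tail). -/
theorem stmt_12 {Ω : Type*} [m0 : MeasurableSpace Ω] (μ : Measure Ω)
    [IsProbabilityMeasure μ]
    (N d : ℕ) (hd : 0 < d)
    (X : Fin N → Ω → Fin d)
    (hmeas : ∀ i, Measurable (X i))
    (hindep : iIndepFun X μ)
    (hunif : ∀ i v, μ {ω | X i ω = v} = (d : ENNReal)⁻¹)
    (Z : Fin N → Ω → ℝ)
    (hZ : ∀ i ω, Z i ω = if ∀ j, j < i → X j ω ≠ X i ω then 1 else 0)
    (K : ℝ) (hK : K = (N : ℝ) * (N - 1) / (2 * d))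
    (t : ℝ) (ht : 0 < t) :
    (μ {ω | (∑ i, Z i ω) ≤ (N : ℝ) - N * (N - 1) / (2 * d) - t}).toReal
      ≤ Real.exp (-t ^ 2 / (2 * K + 2 * t / 3)) := by
  classical
  have hd' : (0:ℝ) < d := by exact_mod_cast hd
  set c : ℝ := (N : ℝ) - N * (N - 1) / (2 * d) - t with hc
  set B : Finset (Fin N → Fin d) :=
    Finset.univ.filter (fun x => (∑ i, Stmt12.Zf i x) ≤ c) with hBdef
  have hZZ : ∀ (ω : Ω) (i : Fin N), Z i ω = Stmt12.Zf i (fun j => X j ω) := by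
    intro ω i
    rw [hZ i ω, Stmt12.Zf]
  have hevent : {ω | (∑ i, Z i ω) ≤ c} = ⋃ y ∈ B, ⋂ i, X i ⁻¹' {y i} := by
    ext ω
    simp only [Set.mem_setOf_eq, Set.mem_iUnion, Set.mem_iInter, Set.mem_preimage,
      Set.mem_singleton_iff]
    constructor
    · intro h
      refine ⟨fun i => X i ω, ?_, fun i => rfl⟩
      rw [hBdef, Finset.mem_filter]
      refine ⟨Finset.mem_univ _, ?_⟩
      rw [← Finset.sum_congr rfl fun i _ => hZZ ω i]
      exact h
    · rintro ⟨y, hy, hxy⟩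
      rw [hBdef, Finset.mem_filter] at hy
      have hyx : (fun j => X j ω) = y := funext hxy
      rw [Finset.sum_congr rfl fun i (_ : i ∈ Finset.univ) => hZZ ω i, hyx]
      exact hy.2
  have hone : ∀ y : Fin N → Fin d, μ (⋂ i, X i ⁻¹' {y i}) = ((d : ENNReal)⁻¹) ^ N := by
    intro y
    have h1 : (⋂ i, X i ⁻¹' {y i}) = ⋂ i ∈ Finset.univ, X i ⁻¹' {y i} := by simp
    rw [h1, hindep.measure_inter_preimage_eq_mul Finset.univ
      (sets := fun i => {y i}) (fun i _ => measurableSet_singleton (y i))]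
    have h2 : ∀ i : Fin N, μ (X i ⁻¹' {y i}) = (d : ENNReal)⁻¹ := by
      intro i
      have : X i ⁻¹' {y i} = {ω | X i ω = y i} := rfl
      rw [this]
      exact hunif i (y i)
    rw [Finset.prod_congr rfl fun i _ => h2 i, Finset.prod_const, Finset.card_univ,
      Fintype.card_fin]
  have hmeasE : μ {ω | (∑ i, Z i ω) ≤ c} = (B.card : ENNReal) * ((d : ENNReal)⁻¹) ^ N := by
    rw [hevent, measure_biUnion_finset]
    · rw [Finset.sum_congr rfl fun y _ => hone y, Finset.sum_const, nsmul_eq_mul]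
    · intro y _ y' _ hne
      rw [Function.onFun, Set.disjoint_left]
      intro ω hω hω'
      simp only [Set.mem_iInter, Set.mem_preimage, Set.mem_singleton_iff] at hω hω'
      exact hne (funext fun i => (hω i).symm.trans (hω' i))
    · intro y _
      exact MeasurableSet.iInter fun i => hmeas i (measurableSet_singleton _)
  have htoReal : (μ {ω | (∑ i, Z i ω) ≤ c}).toReal = (B.card : ℝ) * ((d : ℝ)⁻¹) ^ N := by
    rw [hmeasE, ENNReal.toReal_mul, ENNReal.toReal_pow, ENNReal.toReal_inv]
    simp
  have hcount : (B.card : ℝ) ≤ (d : ℝ) ^ N * Real.exp (-t ^ 2 / (2 * K + 2 * t / 3)) := by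
    apply Stmt12.count_bound hd t K ht hK
    intro x hx
    rw [hBdef, Finset.mem_filter] at hx
    exact hx.2
  rw [htoReal]
  calc (B.card : ℝ) * ((d : ℝ)⁻¹) ^ N
      ≤ ((d : ℝ) ^ N * Real.exp (-t ^ 2 / (2 * K + 2 * t / 3))) * ((d : ℝ)⁻¹) ^ N := by
        apply mul_le_mul_of_nonneg_right hcount
        positivity
    _ = Real.exp (-t ^ 2 / (2 * K + 2 * t / 3)) := by
        have hone' : (d : ℝ) ^ N * ((d : ℝ)⁻¹) ^ N = 1 := by
          rw [← mul_pow, mul_inv_cancel₀ hd'.ne', one_pow]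
        calc ((d : ℝ) ^ N * Real.exp (-t ^ 2 / (2 * K + 2 * t / 3))) * ((d : ℝ)⁻¹) ^ N
            = ((d : ℝ) ^ N * ((d : ℝ)⁻¹) ^ N) * Real.exp (-t ^ 2 / (2 * K + 2 * t / 3)) := by ring
          _ = Real.exp (-t ^ 2 / (2 * K + 2 * t / 3)) := by rw [hone', one_mul]
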